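/- Let k ∈ ℤ and n ≥ 1. The modified martingale transform T_{k,n}(f) = Σ_{I∈𝒟} Σ_{J∈I_{k,n}} ⟨f,ψ_J⟩ ψ_I is bounded on BMO(ℝ) with operator norm ≲ 2^{|k|/2}(log(n+1) + max(-k,0) + 1)^{1/2}, with implicit constant independent of k and n. -/

import Mathlib

open ENNReal

/-- Length of a dyadic interval of scale `j`. -/
noncomputable def dLen (j : ℤ) : ℝ := (2 : ℝ) ^ (-j)

/-- The dyadic interval indexed by `p = (j,k)`, namely `2^{-j}[k,k+1]`. -/
noncomputable def dIcc (p : ℤ × ℤ) : Set ℝ :=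
  Set.Icc ((p.2 : ℝ) * dLen p.1) (((p.2 : ℝ) + 1) * dLen p.1)

/-- Relative distance `rdist(I,J) = diam(I∪J)/max(|I|,|J|)` between dyadic intervals. -/
noncomputable def dRdist (p q : ℤ × ℤ) : ℝ :=
  (max (((p.2 : ℝ) + 1) * dLen p.1) (((q.2 : ℝ) + 1) * dLen q.1)
      - min ((p.2 : ℝ) * dLen p.1) ((q.2 : ℝ) * dLen q.1)) / max (dLen p.1) (dLen q.1)

lemma dLen_pos (j : ℤ) : 0 < dLen j := zpow_pos two_pos _

lemma aux_tsum_le_card_mul {ι : Type*} (f : ι → ℝ≥0∞) (s : Finset ι)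
    (hs : ∀ i, f i ≠ 0 → i ∈ s) (x : ℝ≥0∞) (hx : ∀ i, f i ≤ x) :
    ∑' i, f i ≤ s.card * x := by
  rw [tsum_eq_sum (f := f) (s := s) (fun i hi => by_contra fun h => hi (hs i h))]
  calc ∑ i ∈ s, f i ≤ ∑ _i ∈ s, x := Finset.sum_le_sum fun i _ => hx i
  _ = s.card * x := by rw [Finset.sum_const, nsmul_eq_mul]

lemma aux_card_Icc_le {a b : ℤ} {R : ℝ} (h : ((b : ℝ) - a + 1) ≤ R) (h0 : 0 ≤ R) :
    ((Finset.Icc a b).card : ℝ) ≤ R := by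
  rcases le_or_gt a b with hab | hab
  · rw [Int.card_Icc]
    have h1 : ((b + 1 - a).toNat : ℤ) = b + 1 - a := Int.toNat_of_nonneg (by omega)
    have h2 : ((b + 1 - a).toNat : ℝ) = (b : ℝ) + 1 - a := by exact_mod_cast congrArg (Int.cast : ℤ → ℝ) h1
    rw [h2]; linarith
  · rw [Finset.Icc_eq_empty (by omega)]; simpa using h0

lemma aux_lattice_mem {s x : ℝ} (hs : 0 < s) {m D : ℤ}
    (h1 : x ≤ m * s) (h2 : m * s ≤ x + D * s) :
    ⌈x / s⌉ ≤ m ∧ m ≤ ⌈x / s⌉ + D := by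
  constructor
  · exact Int.ceil_le.mpr (by rw [div_le_iff₀ hs]; linarith [h1])
  · have hx : ((m - D : ℤ) : ℝ) ≤ x / s := by
      rw [le_div_iff₀ hs]; push_cast; nlinarith
    have h3 := hx.trans (Int.le_ceil (x / s))
    have h4 : (m - D : ℤ) ≤ ⌈x / s⌉ := by exact_mod_cast h3
    omega

lemma aux_sq_sum_le {ι : Type*} (s : Finset ι) (f : ι → ℝ) :
    (∑ i ∈ s, f i) ^ 2 ≤ (s.card : ℝ) * ∑ i ∈ s, f i ^ 2 := by
  have := Finset.sum_mul_sq_le_sq_mul_sq s (fun _ => (1 : ℝ)) f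
  simpa using this

lemma aux_block_mem {L l α β nr : ℝ} (hL : 0 < L) (hl : 0 < l) (hn : 1 ≤ nr)
    (h1 : nr * max L l ≤ max (α + L) (β + l) - min α β)
    (h2 : max (α + L) (β + l) - min α β < (nr + 1) * max L l) :
    (α + (nr * max L l - l) ≤ β ∧ β ≤ α + (nr * max L l - l) + max L l) ∨
    (α + 0 ≤ β ∧ β ≤ α + 0 + max L l) ∨
    (α + (L - (nr + 1) * max L l) ≤ β ∧ β ≤ α + (L - (nr + 1) * max L l) + max L l) ∨
    (α + (-max L l) ≤ β ∧ β ≤ α + (-max L l) + max L l) := by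
  have hLmx : L ≤ max L l := le_max_left _ _
  have hlmx : l ≤ max L l := le_max_right _ _
  rcases le_or_gt α β with hab | hab
  · rw [min_eq_left hab] at h1 h2
    rcases le_or_gt (α + L) (β + l) with hc | hc
    · left
      rw [max_eq_right hc] at h1 h2
      constructor <;> linarith
    · right; left
      rw [max_eq_left hc.le] at h1 h2
      constructor <;> linarith
  · rw [min_eq_right hab.le] at h1 h2
    rcases le_or_gt (β + l) (α + L) with hc | hc
    · right; right; left
      rw [max_eq_left hc] at h1 h2
      constructor <;> linarith
    · right; right; right
      rw [max_eq_right hc.le] at h1 h2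
      constructor <;> linarith

lemma aux_max_dLen_left (j k : ℤ) :
    max (dLen j) (dLen (j + k)) = dLen j * 2 ^ ((max (-k) 0).toNat) := by
  have h2 : ((2 : ℝ)) ^ ((max (-k) 0).toNat) = (2 : ℝ) ^ (max (-k) 0) := by
    rw [← zpow_natCast]
    congr 1
    omega
  rw [h2]
  simp only [dLen]
  rcases le_or_gt k 0 with hk | hk
  · rw [max_eq_left (by omega : -k ≥ (0 : ℤ))]
    rw [max_eq_right (zpow_le_zpow_right₀ (one_le_two (α := ℝ)) (by omega : -j ≤ -(j + k)))]
    rw [← zpow_add₀ (two_ne_zero (α := ℝ))]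
    congr 1
    ring
  · rw [max_eq_right (by omega : -k ≤ (0 : ℤ))]
    rw [max_eq_left (zpow_le_zpow_right₀ (one_le_two (α := ℝ)) (by omega : -(j + k) ≤ -j))]
    simp

lemma aux_max_dLen_right (j k : ℤ) :
    max (dLen j) (dLen (j + k)) = dLen (j + k) * 2 ^ ((max k 0).toNat) := by
  have h := aux_max_dLen_left (j + k) (-k)
  rw [neg_neg, add_neg_cancel_right] at h
  rw [max_comm] at h
  exact h

lemma aux_sum_biUnion_le {ι κ : Type*} [DecidableEq κ] (s : Finset ι) (t : ι → Finset κ)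
    (f : κ → ℝ≥0∞) :
    ∑ x ∈ s.biUnion t, f x ≤ ∑ i ∈ s, ∑ x ∈ t i, f x := by
  classical
  induction s using Finset.induction with
  | empty => simp
  | insert a s' h ih =>
      rw [Finset.biUnion_insert, Finset.sum_insert h]
      refine le_trans ?_ (add_le_add_right ih _)
      have := Finset.sum_union_inter (s₁ := t a) (s₂ := s'.biUnion t) (f := f)
      calc ∑ x ∈ t a ∪ s'.biUnion t, f x
          ≤ ∑ x ∈ t a ∪ s'.biUnion t, f x + ∑ x ∈ t a ∩ s'.biUnion t, f x := le_self_add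
        _ = ∑ x ∈ t a, f x + ∑ x ∈ s'.biUnion t, f x := this

lemma aux_finset_carleson (a : ℤ × ℤ → ℝ) (B : ℝ)
    (H : ∀ u v : ℝ, u < v →
      ∑' p : {p : ℤ × ℤ // dIcc p ⊆ Set.Icc u v}, ENNReal.ofReal ((a p.1) ^ 2)
        ≤ ENNReal.ofReal (B ^ 2 * (v - u)))
    (t : Finset (ℤ × ℤ)) {x y : ℝ} (hxy : x < y)
    (ht : ∀ q ∈ t, dIcc q ⊆ Set.Icc x y) :
    ∑ q ∈ t, ENNReal.ofReal ((a q) ^ 2) ≤ ENNReal.ofReal (B ^ 2 * (y - x)) := by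
  have h1 : ∑ q ∈ t, ENNReal.ofReal ((a q) ^ 2)
      = ∑' q : {q // q ∈ t}, ENNReal.ofReal ((a q.1) ^ 2) := by
    rw [tsum_fintype]
    exact (Finset.sum_attach t _).symm
  rw [h1]
  refine le_trans ?_ (H x y hxy)
  exact ENNReal.tsum_comp_le_tsum_of_injective
    (f := fun q : {q // q ∈ t} => (⟨q.1, ht q.1 q.2⟩ : {p : ℤ × ℤ // dIcc p ⊆ Set.Icc x y}))
    (fun q q' h => Subtype.ext (congrArg Subtype.val h : _)) _
set_option maxHeartbeats 2000000 in
/-- The modified martingale transform `T_{k,n}`, expressed on wavelet coefficients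
(`a_I = ⟨f,ψ_I⟩`, with the coefficients of `T_{k,n} f` given by `I ↦ Σ_{J∈I_{k,n}} a_J`),
is bounded on BMO(ℝ) with operator norm `≲ 2^{|k|/2}(log₂(n+1) + max(-k,0) + 1)^{1/2}`,
with an absolute implicit constant independent of `f`, `k` and `n`. -/
theorem stmt6 :
    ∃ C : ℝ, 0 < C ∧
      ∀ (a : ℤ × ℤ → ℝ) (B : ℝ) (k : ℤ) (n : ℕ), 1 ≤ n → 0 ≤ B →
        (∀ u v : ℝ, u < v →
          ∑' p : {p : ℤ × ℤ // dIcc p ⊆ Set.Icc u v}, ENNReal.ofReal ((a p.1) ^ 2)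
            ≤ ENNReal.ofReal (B ^ 2 * (v - u))) →
        ∀ u v : ℝ, u < v →
          ∑' p : {p : ℤ × ℤ // dIcc p ⊆ Set.Icc u v},
              ENNReal.ofReal
                ((∑' q : {q : ℤ × ℤ // q.1 = p.1.1 + k ∧ (n : ℝ) ≤ dRdist p.1 q ∧
                    dRdist p.1 q < (n : ℝ) + 1}, a q) ^ 2)
            ≤ ENNReal.ofReal
                ((C * (2 : ℝ) ^ ((|k| : ℝ) / 2)
                    * (Real.logb 2 ((n : ℝ) + 1) + ((max (-k) 0 : ℤ) : ℝ) + 1) ^ ((1 : ℝ) / 2)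
                    * B) ^ 2 * (v - u)) := by
  classical
  refine ⟨100, by norm_num, ?_⟩
  intro a B k n hn hB H u v huv
  set K : ℕ := (max k 0).toNat with hKdef
  set K' : ℕ := (max (-k) 0).toNat with hK'def
  have hn1 : (1 : ℝ) ≤ (n : ℝ) := by exact_mod_cast hn
  have hvu : (0 : ℝ) < v - u := by linarith
  set mxf : ℤ → ℝ := fun j => max (dLen j) (dLen (j + k)) with hmxf
  have hmxL : ∀ j, mxf j = dLen j * 2 ^ K' := fun j => aux_max_dLen_left j k
  have hmxl : ∀ j, mxf j = dLen (j + k) * 2 ^ K := fun j => aux_max_dLen_right j k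
  have hmxpos : ∀ j, 0 < mxf j := fun j => lt_of_lt_of_le (dLen_pos j) (le_max_left _ _)
  have hlmx : ∀ j, dLen (j + k) ≤ mxf j := fun j => le_max_right _ _
  have hLmx : ∀ j, dLen j ≤ mxf j := fun j => le_max_left _ _
  set d : ℤ → Fin 4 → ℝ := fun j i =>
    if i = 0 then (n : ℝ) * mxf j - dLen (j + k) else if i = 1 then 0
    else if i = 2 then dLen j - ((n : ℝ) + 1) * mxf j else -(mxf j) with hd
  set w : ℤ × ℤ → ℝ≥0∞ := fun q => ENNReal.ofReal ((a q) ^ 2) with hwdef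
  set ci : ℤ × ℤ → Fin 4 → ℝ := fun p i => (p.2 : ℝ) * dLen p.1 + d p.1 i with hci
  set blocks : ℤ × ℤ → Finset (ℤ × ℤ) := fun p =>
    (Finset.univ : Finset (Fin 4)).biUnion fun i =>
      (Finset.Icc ⌈ci p i / dLen (p.1 + k)⌉ (⌈ci p i / dLen (p.1 + k)⌉ + 2 ^ K)).image
        fun m => (p.1 + k, m) with hblocks
  -- membership of the relevant wavelets in the finite block set
  have hdvals : ∀ (j : ℤ) (i : Fin 4), d j i = (n : ℝ) * mxf j - dLen (j + k) ∨ d j i = 0 ∨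
      d j i = dLen j - ((n : ℝ) + 1) * mxf j ∨ d j i = -(mxf j) := by
    intro j i
    simp only [hd]
    split_ifs <;> tauto
  have hmem_blocks : ∀ p₀ q : ℤ × ℤ, q.1 = p₀.1 + k → (n : ℝ) ≤ dRdist p₀ q →
      dRdist p₀ q < (n : ℝ) + 1 → q ∈ blocks p₀ := by
    intro p₀ q hq1 hr1 hr2
    obtain ⟨s, m⟩ := q
    obtain rfl : s = p₀.1 + k := hq1
    have hLp : (0 : ℝ) < dLen p₀.1 := dLen_pos _
    have hlp : (0 : ℝ) < dLen (p₀.1 + k) := dLen_pos _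
    have hM : (0 : ℝ) < max (dLen p₀.1) (dLen (p₀.1 + k)) := hmxpos p₀.1
    rw [dRdist] at hr1 hr2
    dsimp only at hr1 hr2
    have hD1 := (le_div_iff₀ hM).mp hr1
    have hD2 := (div_lt_iff₀ hM).mp hr2
    rw [add_one_mul, add_one_mul] at hD1 hD2
    have hbm := aux_block_mem (α := (p₀.2 : ℝ) * dLen p₀.1) (β := (m : ℝ) * dLen (p₀.1 + k))
      hLp hlp hn1 (by linarith [hD1]) (by linarith [hD2])
    have hkey : ∃ i : Fin 4, ci p₀ i ≤ (m : ℝ) * dLen (p₀.1 + k) ∧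
        (m : ℝ) * dLen (p₀.1 + k) ≤ ci p₀ i + mxf p₀.1 := by
      rcases hbm with h | h | h | h
      · exact ⟨0, by simpa [hci, hd, hmxf] using h⟩
      · exact ⟨1, by simpa [hci, hd, hmxf] using h⟩
      · refine ⟨2, by simpa [hci, hd, hmxf] using h⟩
      · refine ⟨3, by simpa [hci, hd, hmxf] using h⟩
    obtain ⟨i, hlo, hhi⟩ := hkey
    have hlat := aux_lattice_mem (s := dLen (p₀.1 + k)) (x := ci p₀ i) (m := m)
      (D := 2 ^ K) hlp hlo (by
        push_cast
        rw [mul_comm ((2 : ℝ) ^ K) (dLen (p₀.1 + k)), ← hmxl p₀.1]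
        exact hhi)
    simp only [hblocks, Finset.mem_biUnion, Finset.mem_image, Finset.mem_Icc]
    exact ⟨i, Finset.mem_univ i, m, hlat, rfl⟩
  -- window containment for members of a block
  have hwin : ∀ (p₀ : ℤ × ℤ) (i : Fin 4) (m : ℤ),
      ⌈ci p₀ i / dLen (p₀.1 + k)⌉ ≤ m → m ≤ ⌈ci p₀ i / dLen (p₀.1 + k)⌉ + 2 ^ K →
      dIcc (p₀.1 + k, m) ⊆ Set.Icc (ci p₀ i) (ci p₀ i + 3 * mxf p₀.1) := by
    intro p₀ i m h1 h2
    have hlp : (0 : ℝ) < dLen (p₀.1 + k) := dLen_pos _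
    have hceil := Int.le_ceil (ci p₀ i / dLen (p₀.1 + k))
    have hceil2 := Int.ceil_lt_add_one (ci p₀ i / dLen (p₀.1 + k))
    have hml : ci p₀ i ≤ (m : ℝ) * dLen (p₀.1 + k) := by
      rw [← div_le_iff₀ hlp]
      calc ci p₀ i / dLen (p₀.1 + k) ≤ (⌈ci p₀ i / dLen (p₀.1 + k)⌉ : ℝ) := hceil
        _ ≤ (m : ℝ) := by exact_mod_cast h1
    have hmu : ((m : ℝ) + 1) * dLen (p₀.1 + k) ≤ ci p₀ i + 3 * mxf p₀.1 := by
      have hm' : (m : ℝ) ≤ (⌈ci p₀ i / dLen (p₀.1 + k)⌉ : ℝ) + 2 ^ K := by exact_mod_cast h2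
      have hstep : (m : ℝ) + 1 ≤ ci p₀ i / dLen (p₀.1 + k) + 2 + 2 ^ K := by linarith
      have h3 : ((m : ℝ) + 1) * dLen (p₀.1 + k)
          ≤ (ci p₀ i / dLen (p₀.1 + k) + 2 + 2 ^ K) * dLen (p₀.1 + k) :=
        mul_le_mul_of_nonneg_right hstep hlp.le
      have hdiv : (ci p₀ i / dLen (p₀.1 + k)) * dLen (p₀.1 + k) = ci p₀ i :=
        div_mul_cancel₀ _ hlp.ne'
      have h4 : (ci p₀ i / dLen (p₀.1 + k) + 2 + 2 ^ K) * dLen (p₀.1 + k)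
          = ci p₀ i + 2 * dLen (p₀.1 + k) + 2 ^ K * dLen (p₀.1 + k) := by
        rw [add_mul, add_mul, hdiv]
      have h5 : mxf p₀.1 = dLen (p₀.1 + k) * 2 ^ K := hmxl p₀.1
      have h6 := hlmx p₀.1
      rw [h4] at h3
      linarith [h3, h5, h6]
    rw [dIcc]
    dsimp only
    exact Set.Icc_subset_Icc hml hmu
  -- cardinality of the block set
  have hcard_blocks : ∀ p₀ : ℤ × ℤ, (blocks p₀).card ≤ 4 * (2 ^ K + 1) := by
    intro p₀
    refine le_trans Finset.card_biUnion_le ?_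
    have h1 : ∀ i : Fin 4,
        ((Finset.Icc ⌈ci p₀ i / dLen (p₀.1 + k)⌉ (⌈ci p₀ i / dLen (p₀.1 + k)⌉ + 2 ^ K)).image
          fun m => (p₀.1 + k, m)).card ≤ 2 ^ K + 1 := by
      intro i
      refine le_trans Finset.card_image_le ?_
      rw [Int.card_Icc]
      have : (⌈ci p₀ i / dLen (p₀.1 + k)⌉ + 2 ^ K + 1 - ⌈ci p₀ i / dLen (p₀.1 + k)⌉)
          = ((2 ^ K + 1 : ℕ) : ℤ) := by push_cast; ring
      rw [this, Int.toNat_natCast]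
    calc ∑ i : Fin 4, ((Finset.Icc ⌈ci p₀ i / dLen (p₀.1 + k)⌉
            (⌈ci p₀ i / dLen (p₀.1 + k)⌉ + 2 ^ K)).image fun m => (p₀.1 + k, m)).card
        ≤ ∑ _i : Fin 4, (2 ^ K + 1) := Finset.sum_le_sum fun i _ => h1 i
      _ = 4 * (2 ^ K + 1) := by simp [Finset.sum_const, Finset.card_univ, smul_eq_mul]
  -- Cauchy-Schwarz step
  have hCS : ∀ p₀ : ℤ × ℤ,
      ENNReal.ofReal ((∑' q : {q : ℤ × ℤ // q.1 = p₀.1 + k ∧ (n : ℝ) ≤ dRdist p₀ q ∧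
          dRdist p₀ q < (n : ℝ) + 1}, a q) ^ 2)
        ≤ ((4 * (2 ^ K + 1) : ℕ) : ℝ≥0∞) * ∑ q ∈ blocks p₀, w q := by
    intro p₀
    set S : Set (ℤ × ℤ) := {q | q.1 = p₀.1 + k ∧ (n : ℝ) ≤ dRdist p₀ q ∧
        dRdist p₀ q < (n : ℝ) + 1} with hS
    have hb : (∑' q : {q : ℤ × ℤ // q.1 = p₀.1 + k ∧ (n : ℝ) ≤ dRdist p₀ q ∧
        dRdist p₀ q < (n : ℝ) + 1}, a q) = ∑ q ∈ blocks p₀, S.indicator a q := by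
      rw [show (∑' q : {q : ℤ × ℤ // q.1 = p₀.1 + k ∧ (n : ℝ) ≤ dRdist p₀ q ∧
          dRdist p₀ q < (n : ℝ) + 1}, a q) = ∑' q : S, a q from rfl, tsum_subtype S a]
      refine tsum_eq_sum fun q hq => Set.indicator_of_notMem (fun hmem => ?_) a
      exact hq (hmem_blocks p₀ q hmem.1 hmem.2.1 hmem.2.2)
    rw [hb]
    have hcs1 : (∑ q ∈ blocks p₀, S.indicator a q) ^ 2
        ≤ ((blocks p₀).card : ℝ) * ∑ q ∈ blocks p₀, (a q) ^ 2 := by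
      refine le_trans (aux_sq_sum_le _ _) ?_
      refine mul_le_mul_of_nonneg_left (Finset.sum_le_sum fun q _ => ?_) (Nat.cast_nonneg _)
      by_cases hqS : q ∈ S
      · rw [Set.indicator_of_mem hqS]
      · rw [Set.indicator_of_notMem hqS]
        simpa using sq_nonneg (a q)
    refine le_trans (ENNReal.ofReal_le_ofReal hcs1) ?_
    rw [ENNReal.ofReal_mul (Nat.cast_nonneg _), ENNReal.ofReal_natCast,
      ENNReal.ofReal_sum_of_nonneg (fun q _ => sq_nonneg _)]
    exact mul_le_mul_left (Nat.cast_le.mpr (hcard_blocks p₀)) _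
  -- Carleson bound for the sum over one block set
  have hGbound : ∀ p₀ : ℤ × ℤ,
      ∑ q ∈ blocks p₀, w q ≤ ENNReal.ofReal (12 * (B ^ 2 * mxf p₀.1)) := by
    intro p₀
    rw [hblocks]
    refine le_trans (aux_sum_biUnion_le _ _ _) ?_
    have hone : ∀ i : Fin 4,
        ∑ q ∈ (Finset.Icc ⌈ci p₀ i / dLen (p₀.1 + k)⌉
            (⌈ci p₀ i / dLen (p₀.1 + k)⌉ + 2 ^ K)).image (fun m => (p₀.1 + k, m)), w q
          ≤ ENNReal.ofReal (B ^ 2 * (3 * mxf p₀.1)) := by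
      intro i
      have hxy : ci p₀ i < ci p₀ i + 3 * mxf p₀.1 := by linarith [hmxpos p₀.1]
      have := aux_finset_carleson a B H
        ((Finset.Icc ⌈ci p₀ i / dLen (p₀.1 + k)⌉
            (⌈ci p₀ i / dLen (p₀.1 + k)⌉ + 2 ^ K)).image (fun m => (p₀.1 + k, m))) hxy ?_
      · refine le_trans (le_of_eq rfl) (le_trans this (le_of_eq ?_))
        congr 1
        ring
      · intro q hq
        simp only [Finset.mem_image, Finset.mem_Icc] at hq
        obtain ⟨m, ⟨hm1, hm2⟩, rfl⟩ := hq
        exact hwin p₀ i m hm1 hm2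
    refine le_trans (Finset.sum_le_sum fun i _ => hone i) ?_
    rw [Finset.sum_const, Finset.card_univ]
    have : ((4 : ℕ) • ENNReal.ofReal (B ^ 2 * (3 * mxf p₀.1)))
        = ENNReal.ofReal (4 * (B ^ 2 * (3 * mxf p₀.1))) := by
      rw [nsmul_eq_mul]
      rw [show ((4 : ℕ) : ℝ≥0∞) = ENNReal.ofReal (4 : ℝ) by
        rw [ENNReal.ofReal_ofNat]; norm_num, ← ENNReal.ofReal_mul (by norm_num)]
    rw [show (Fintype.card (Fin 4)) = 4 from rfl, this]
    exact ENNReal.ofReal_le_ofReal (by nlinarith [hmxpos p₀.1, sq_nonneg B])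
  -- multiplicity finset
  set Mq : ℤ × ℤ → Finset (ℤ × ℤ) := fun q =>
    (Finset.univ : Finset (Fin 4)).biUnion fun i =>
      (Finset.Icc
          ⌈((q.2 : ℝ) * dLen q.1 - d (q.1 - k) i - dLen q.1 - mxf (q.1 - k)) / dLen (q.1 - k)⌉
          (⌈((q.2 : ℝ) * dLen q.1 - d (q.1 - k) i - dLen q.1 - mxf (q.1 - k)) / dLen (q.1 - k)⌉
            + 2 * 2 ^ K')).image
        fun m => (q.1 - k, m) with hMqdef
  have hMq : ∀ p₀ q : ℤ × ℤ, q ∈ blocks p₀ → p₀ ∈ Mq q := by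
    intro p₀ q hq
    simp only [hblocks, Finset.mem_biUnion, Finset.mem_image, Finset.mem_Icc] at hq
    obtain ⟨i, -, m, ⟨hm1, hm2⟩, rfl⟩ := hq
    have hlp : (0 : ℝ) < dLen (p₀.1 + k) := dLen_pos _
    have hLp : (0 : ℝ) < dLen p₀.1 := dLen_pos _
    have hceil := Int.le_ceil (ci p₀ i / dLen (p₀.1 + k))
    have hceil2 := Int.ceil_lt_add_one (ci p₀ i / dLen (p₀.1 + k))
    have hml : ci p₀ i ≤ (m : ℝ) * dLen (p₀.1 + k) := by
      rw [← div_le_iff₀ hlp]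
      calc ci p₀ i / dLen (p₀.1 + k) ≤ (⌈ci p₀ i / dLen (p₀.1 + k)⌉ : ℝ) := hceil
        _ ≤ (m : ℝ) := by exact_mod_cast hm1
    have hmu : (m : ℝ) * dLen (p₀.1 + k)
        ≤ ci p₀ i + dLen (p₀.1 + k) + mxf p₀.1 := by
      have hm' : (m : ℝ) ≤ (⌈ci p₀ i / dLen (p₀.1 + k)⌉ : ℝ) + 2 ^ K := by exact_mod_cast hm2
      have hstep : (m : ℝ) ≤ ci p₀ i / dLen (p₀.1 + k) + 1 + 2 ^ K := by linarith
      have h3 := mul_le_mul_of_nonneg_right hstep hlp.le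
      have h4 : (ci p₀ i / dLen (p₀.1 + k) + 1 + 2 ^ K) * dLen (p₀.1 + k)
          = ci p₀ i + dLen (p₀.1 + k) + 2 ^ K * dLen (p₀.1 + k) := by
        rw [add_mul, add_mul, div_mul_cancel₀ _ hlp.ne', one_mul]
      rw [h4] at h3
      have h5 : mxf p₀.1 = dLen (p₀.1 + k) * 2 ^ K := hmxl p₀.1
      linarith [h3, h5]
    have hciv : ci p₀ i = (p₀.2 : ℝ) * dLen p₀.1 + d p₀.1 i := rfl
    have hlat := aux_lattice_mem (s := dLen p₀.1)
      (x := (m : ℝ) * dLen (p₀.1 + k) - d p₀.1 i - dLen (p₀.1 + k) - mxf p₀.1)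
      (m := p₀.2) (D := 2 * 2 ^ K') hLp
      (by linarith [hmu])
      (by
        push_cast
        have h6 : mxf p₀.1 = dLen p₀.1 * 2 ^ K' := hmxL p₀.1
        have h7 := hlmx p₀.1
        nlinarith [hml, h6, h7])
    simp only [hMqdef]
    refine Finset.mem_biUnion.mpr ⟨i, Finset.mem_univ i,
      Finset.mem_image.mpr ⟨p₀.2, Finset.mem_Icc.mpr ?_, ?_⟩⟩
    · simpa only [add_sub_cancel_right] using hlat
    · simp only [add_sub_cancel_right]
  have hcard_Mq : ∀ q : ℤ × ℤ, (Mq q).card ≤ 4 * (2 * 2 ^ K' + 1) := by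
    intro q
    rw [hMqdef]
    refine le_trans Finset.card_biUnion_le ?_
    have h1 : ∀ i : Fin 4,
        ((Finset.Icc
            ⌈((q.2 : ℝ) * dLen q.1 - d (q.1 - k) i - dLen q.1 - mxf (q.1 - k)) / dLen (q.1 - k)⌉
            (⌈((q.2 : ℝ) * dLen q.1 - d (q.1 - k) i - dLen q.1 - mxf (q.1 - k)) / dLen (q.1 - k)⌉
              + 2 * 2 ^ K')).image fun m => (q.1 - k, m)).card ≤ 2 * 2 ^ K' + 1 := by
      intro i
      refine le_trans Finset.card_image_le ?_
      rw [Int.card_Icc]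
      have h2 : (⌈((q.2 : ℝ) * dLen q.1 - d (q.1 - k) i - dLen q.1 - mxf (q.1 - k))
            / dLen (q.1 - k)⌉ + 2 * 2 ^ K' + 1
          - ⌈((q.2 : ℝ) * dLen q.1 - d (q.1 - k) i - dLen q.1 - mxf (q.1 - k))
            / dLen (q.1 - k)⌉) = ((2 * 2 ^ K' + 1 : ℕ) : ℤ) := by push_cast; ring
      rw [h2, Int.toNat_natCast]
    calc _ ≤ ∑ _i : Fin 4, (2 * 2 ^ K' + 1) := Finset.sum_le_sum fun i _ => h1 i
      _ = 4 * (2 * 2 ^ K' + 1) := by simp [Finset.sum_const, Finset.card_univ, smul_eq_mul]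
  -- endpoints of dyadic intervals inside [u,v]
  set P : Set (ℤ × ℤ) := {p | dIcc p ⊆ Set.Icc u v} with hPdef
  have hPmem : ∀ p₀ : ℤ × ℤ, p₀ ∈ P →
      u ≤ (p₀.2 : ℝ) * dLen p₀.1 ∧ ((p₀.2 : ℝ) + 1) * dLen p₀.1 ≤ v := by
    intro p₀ hp
    have hsub : Set.Icc ((p₀.2 : ℝ) * dLen p₀.1) (((p₀.2 : ℝ) + 1) * dLen p₀.1)
        ⊆ Set.Icc u v := hp
    have hle : (p₀.2 : ℝ) * dLen p₀.1 ≤ ((p₀.2 : ℝ) + 1) * dLen p₀.1 := by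
      nlinarith [dLen_pos p₀.1]
    rw [Set.Icc_subset_Icc_iff hle] at hsub
    exact hsub
  have hLle : ∀ p₀ : ℤ × ℤ, p₀ ∈ P → dLen p₀.1 ≤ v - u := by
    intro p₀ hp
    have h1 := (hPmem p₀ hp).1
    have h2 := (hPmem p₀ hp).2
    nlinarith [h1, h2]
  -- window containment for the small scales
  have hwin_small : ∀ p₀ q : ℤ × ℤ, p₀ ∈ P → ((n : ℝ) + 1) * mxf p₀.1 ≤ v - u →
      q ∈ blocks p₀ → dIcc q ⊆ Set.Icc (u - 3 * (v - u)) (v + 3 * (v - u)) := by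
    intro p₀ q hp hsm hq
    simp only [hblocks, Finset.mem_biUnion, Finset.mem_image, Finset.mem_Icc] at hq
    obtain ⟨i, -, m, ⟨hm1, hm2⟩, rfl⟩ := hq
    refine (hwin p₀ i m hm1 hm2).trans (Set.Icc_subset_Icc ?_ ?_)
    · have h1 := (hPmem p₀ hp).1
      have hdlow : -(((n : ℝ) + 1) * mxf p₀.1) ≤ d p₀.1 i := by
        rcases hdvals p₀.1 i with h | h | h | h <;> rw [h] <;>
          nlinarith [hmxpos p₀.1, dLen_pos p₀.1, dLen_pos (p₀.1 + k), hlmx p₀.1, hLmx p₀.1, hn1]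
      have hciv : ci p₀ i = (p₀.2 : ℝ) * dLen p₀.1 + d p₀.1 i := rfl
      rw [hciv]
      linarith [hvu.le, hsm]
    · have h2 := (hPmem p₀ hp).2
      have hdhigh : d p₀.1 i + 3 * mxf p₀.1 ≤ ((n : ℝ) + 1) * mxf p₀.1 + 2 * mxf p₀.1 := by
        rcases hdvals p₀.1 i with h | h | h | h <;> rw [h] <;>
          nlinarith [hmxpos p₀.1, dLen_pos p₀.1, dLen_pos (p₀.1 + k), hlmx p₀.1, hLmx p₀.1, hn1]
      have hciv : ci p₀ i = (p₀.2 : ℝ) * dLen p₀.1 + d p₀.1 i := rfl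
      have hmxle : mxf p₀.1 ≤ v - u := by nlinarith [hmxpos p₀.1, hn1]
      have hav : (p₀.2 : ℝ) * dLen p₀.1 ≤ v := by nlinarith [dLen_pos p₀.1]
      rw [hciv]
      linarith [hsm]
  -- names for constants
  set NN : ℕ := 4 * (2 ^ K + 1) with hNN
  set MM : ℕ := 4 * (2 * 2 ^ K' + 1) with hMM
  set X : ℝ := Real.logb 2 ((n : ℝ) + 1) + ((max (-k) 0 : ℤ) : ℝ) + 1 with hX
  have hK'cast : ((K' : ℕ) : ℝ) = ((max (-k) 0 : ℤ) : ℝ) := by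
    have h1 : ((K' : ℕ) : ℤ) = max (-k) 0 := Int.toNat_of_nonneg (le_max_right _ _)
    exact_mod_cast congrArg (Int.cast : ℤ → ℝ) h1
  have hlogb_nonneg : 0 ≤ Real.logb 2 ((n : ℝ) + 1) :=
    Real.logb_nonneg one_lt_two (by linarith)
  have hmaxk_nonneg : (0 : ℝ) ≤ ((max (-k) 0 : ℤ) : ℝ) := by
    rw [← hK'cast]; positivity
  have hX1 : 1 ≤ X := by rw [hX]; linarith
  have hlogdLen : ∀ j : ℤ, Real.logb 2 (dLen j) = -j := by
    intro j
    rw [dLen, Real.logb, Real.log_zpow]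
    push_cast
    rw [mul_div_assoc, div_self (Real.log_pos one_lt_two).ne', mul_one]
  have hK'log : Real.logb 2 ((2 : ℝ) ^ K') = (K' : ℝ) := by
    rw [Real.logb, Real.log_pow, mul_div_assoc, div_self (Real.log_pos one_lt_two).ne', mul_one]
  set F : ℤ × ℤ → ℝ≥0∞ := fun p₀ => ENNReal.ofReal
    ((∑' q : {q : ℤ × ℤ // q.1 = p₀.1 + k ∧ (n : ℝ) ≤ dRdist p₀ q ∧
      dRdist p₀ q < (n : ℝ) + 1}, a q) ^ 2) with hF
  set GG : ℤ × ℤ → ℝ≥0∞ := fun p => (NN : ℝ≥0∞) * ∑ q ∈ blocks p, w q with hGG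
  set Ps : Set (ℤ × ℤ) := P ∩ {p | ((n : ℝ) + 1) * mxf p.1 ≤ v - u} with hPs
  set Pl : Set (ℤ × ℤ) := P ∩ {p | ¬ (((n : ℝ) + 1) * mxf p.1 ≤ v - u)} with hPl
  have hstart : (∑' p : {p : ℤ × ℤ // dIcc p ⊆ Set.Icc u v},
      ENNReal.ofReal ((∑' q : {q : ℤ × ℤ // q.1 = p.1.1 + k ∧ (n : ℝ) ≤ dRdist p.1 q ∧
        dRdist p.1 q < (n : ℝ) + 1}, a q) ^ 2)) = ∑' p₀, P.indicator F p₀ := tsum_subtype P F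
  rw [hstart]
  have step1 : ∀ p₀, P.indicator F p₀ ≤ Ps.indicator GG p₀ + Pl.indicator GG p₀ := by
    intro p₀
    by_cases hp : p₀ ∈ P
    · have hFle : F p₀ ≤ GG p₀ := hCS p₀
      by_cases hs : ((n : ℝ) + 1) * mxf p₀.1 ≤ v - u
      · have hmemPs : p₀ ∈ Ps := Set.mem_inter hp hs
        have hnPl : p₀ ∉ Pl := by
          intro hmem
          exact hmem.2 hs
        rw [Set.indicator_of_mem hp, Set.indicator_of_mem hmemPs,
          Set.indicator_of_notMem hnPl]
        simpa using hFle
      · have hmemPl : p₀ ∈ Pl := Set.mem_inter hp hs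
        have hnPs : p₀ ∉ Ps := by
          intro hmem
          exact hs hmem.2
        rw [Set.indicator_of_mem hp, Set.indicator_of_notMem hnPs,
          Set.indicator_of_mem hmemPl]
        simpa using hFle
    · have hnPs : p₀ ∉ Ps := by
        intro hmem
        exact hp hmem.1
      have hnPl : p₀ ∉ Pl := by
        intro hmem
        exact hp hmem.1
      rw [Set.indicator_of_notMem hp, Set.indicator_of_notMem hnPs,
        Set.indicator_of_notMem hnPl]
      simp
  refine le_trans (ENNReal.tsum_le_tsum step1) ?_
  rw [ENNReal.tsum_add]
  -- the small-scale part
  have hsmall : ∑' p₀, Ps.indicator GG p₀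
      ≤ (NN : ℝ≥0∞) * ((MM : ℝ≥0∞)
          * ENNReal.ofReal (B ^ 2 * ((v + 3 * (v - u)) - (u - 3 * (v - u))))) := by
    have e1 : ∀ p₀, Ps.indicator GG p₀
        = (NN : ℝ≥0∞) * Ps.indicator (fun p => ∑ q ∈ blocks p, w q) p₀ := by
      intro p₀
      rw [Set.indicator_apply, Set.indicator_apply]
      split_ifs <;> simp [hGG]
    rw [tsum_congr e1, ENNReal.tsum_mul_left]
    refine mul_le_mul_right ?_ _
    have e2 : ∀ p₀, Ps.indicator (fun p => ∑ q ∈ blocks p, w q) p₀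
        = ∑' q, (if p₀ ∈ Ps ∧ q ∈ blocks p₀ then w q else 0) := by
      intro p₀
      by_cases hp : p₀ ∈ Ps
      · rw [Set.indicator_of_mem hp]
        rw [show (∑ q ∈ blocks p₀, w q)
            = ∑ q ∈ blocks p₀, (if p₀ ∈ Ps ∧ q ∈ blocks p₀ then w q else 0) from
          Finset.sum_congr rfl fun q hq => by simp [hp, hq]]
        exact (tsum_eq_sum fun q hq => by simp [hq]).symm
      · rw [Set.indicator_of_notMem hp]
        simp [hp]
    rw [tsum_congr e2, ENNReal.tsum_comm]
    set Win : Set (ℤ × ℤ) :=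
      {q | dIcc q ⊆ Set.Icc (u - 3 * (v - u)) (v + 3 * (v - u))} with hWin
    have e3 : ∀ q, (∑' p₀, if p₀ ∈ Ps ∧ q ∈ blocks p₀ then w q else 0)
        ≤ Win.indicator (fun q => (MM : ℝ≥0∞) * w q) q := by
      intro q
      by_cases hqW : q ∈ Win
      · rw [Set.indicator_of_mem hqW]
        refine le_trans (aux_tsum_le_card_mul _ (Mq q) ?_ (w q) ?_) ?_
        · intro p₀ hne
          by_cases hc : p₀ ∈ Ps ∧ q ∈ blocks p₀
          · exact hMq p₀ q hc.2
          · rw [if_neg hc] at hne; exact absurd rfl hne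
        · intro p₀; split_ifs; exacts [le_rfl, zero_le]
        · exact mul_le_mul_left (Nat.cast_le.mpr (hcard_Mq q)) _
      · rw [Set.indicator_of_notMem hqW]
        have hz : ∀ p₀, (if p₀ ∈ Ps ∧ q ∈ blocks p₀ then w q else 0) = 0 := by
          intro p₀
          rw [if_neg]
          rintro ⟨⟨hpP, hpSm⟩, hqb⟩
          exact hqW (hwin_small p₀ q hpP hpSm hqb)
        simp [hz]
    refine le_trans (ENNReal.tsum_le_tsum e3) ?_
    have e4 : ∀ q, Win.indicator (fun q => (MM : ℝ≥0∞) * w q) q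
        = (MM : ℝ≥0∞) * Win.indicator w q := by
      intro q
      rw [Set.indicator_apply, Set.indicator_apply]
      split_ifs <;> simp
    rw [tsum_congr e4, ENNReal.tsum_mul_left]
    refine mul_le_mul_right ?_ _
    rw [← tsum_subtype Win w]
    exact H (u - 3 * (v - u)) (v + 3 * (v - u)) (by linarith)
  -- the large-scale part
  have hlarge : ∑' p₀, Pl.indicator GG p₀
      ≤ ENNReal.ofReal X
          * ((NN : ℝ≥0∞) * ENNReal.ofReal (12 * (2 ^ K' * (B ^ 2 * (v - u))))) := by
    set Yf : ℤ × ℤ → ℝ≥0∞ :=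
      fun p => (NN : ℝ≥0∞) * ENNReal.ofReal (12 * (B ^ 2 * mxf p.1)) with hYf
    have e1 : ∀ p₀, Pl.indicator GG p₀ ≤ Pl.indicator Yf p₀ := by
      intro p₀
      by_cases hp : p₀ ∈ Pl
      · rw [Set.indicator_of_mem hp, Set.indicator_of_mem hp]
        exact mul_le_mul_right (hGbound p₀) _
      · rw [Set.indicator_of_notMem hp, Set.indicator_of_notMem hp]
    refine le_trans (ENNReal.tsum_le_tsum e1) ?_
    have e2 : (∑' p₀ : ℤ × ℤ, Pl.indicator Yf p₀)
        = ∑' (j : ℤ), ∑' (m : ℤ), Pl.indicator Yf (j, m) := by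
      rw [← ENNReal.tsum_prod]
    rw [e2]
    have hscale : ∀ j : ℤ, (∑' m : ℤ, Pl.indicator Yf (j, m))
        ≤ (NN : ℝ≥0∞) * ENNReal.ofReal (12 * (2 ^ K' * (B ^ 2 * (v - u)))) := by
      intro j
      have hLj : (0 : ℝ) < dLen j := dLen_pos j
      refine le_trans (aux_tsum_le_card_mul _ (Finset.Icc ⌈u / dLen j⌉ (⌊v / dLen j⌋ - 1))
        ?_ (Yf (j, 0)) ?_) ?_
      · intro m hm
        have hmem : (j, m) ∈ Pl := by
          by_contra hc
          rw [Set.indicator_of_notMem hc] at hm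
          exact hm rfl
        have h1 := (hPmem (j, m) hmem.1).1
        have h2 := (hPmem (j, m) hmem.1).2
        dsimp only at h1 h2
        rw [Finset.mem_Icc]
        constructor
        · exact Int.ceil_le.mpr ((div_le_iff₀ hLj).mpr (by linarith))
        · have h3 : ((m : ℝ) + 1) ≤ v / dLen j := by
            rw [le_div_iff₀ hLj]; linarith
          have h4 : (m + 1 : ℤ) ≤ ⌊v / dLen j⌋ := Int.le_floor.mpr (by push_cast; linarith)
          omega
      · intro m
        by_cases hmem : (j, m) ∈ Pl
        · rw [Set.indicator_of_mem hmem]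
        · rw [Set.indicator_of_notMem hmem]; exact zero_le
      · have hcard : ((Finset.Icc ⌈u / dLen j⌉ (⌊v / dLen j⌋ - 1)).card : ℝ)
            ≤ (v - u) / dLen j := by
          refine aux_card_Icc_le ?_ (div_nonneg hvu.le hLj.le)
          push_cast
          have hfl := Int.floor_le (v / dLen j)
          have hce := Int.le_ceil (u / dLen j)
          have hsub : (v - u) / dLen j = v / dLen j - u / dLen j := by ring
          linarith
        have hyf0 : Yf (j, 0) = (NN : ℝ≥0∞) * ENNReal.ofReal (12 * (B ^ 2 * mxf j)) := rfl
        rw [hyf0]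
        rw [show (((Finset.Icc ⌈u / dLen j⌉ (⌊v / dLen j⌋ - 1)).card : ℝ≥0∞)
            * ((NN : ℝ≥0∞) * ENNReal.ofReal (12 * (B ^ 2 * mxf j))))
          = (NN : ℝ≥0∞) * (((Finset.Icc ⌈u / dLen j⌉ (⌊v / dLen j⌋ - 1)).card : ℝ≥0∞)
            * ENNReal.ofReal (12 * (B ^ 2 * mxf j))) from by ring]
        refine mul_le_mul_right ?_ _
        rw [← ENNReal.ofReal_natCast, ← ENNReal.ofReal_mul (Nat.cast_nonneg _)]
        refine ENNReal.ofReal_le_ofReal ?_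
        have h6 : mxf j = dLen j * 2 ^ K' := hmxL j
        calc ((Finset.Icc ⌈u / dLen j⌉ (⌊v / dLen j⌋ - 1)).card : ℝ) * (12 * (B ^ 2 * mxf j))
            ≤ ((v - u) / dLen j) * (12 * (B ^ 2 * mxf j)) := by
              refine mul_le_mul_of_nonneg_right hcard ?_
              have := (hmxpos j).le
              positivity
          _ = 12 * (2 ^ K' * (B ^ 2 * (v - u))) := by
              rw [h6]; field_simp
    set JF : Finset ℤ := Finset.Icc ⌈-Real.logb 2 (v - u)⌉
      (⌈Real.logb 2 ((n : ℝ) + 1) + (K' : ℝ) - Real.logb 2 (v - u)⌉ - 1) with hJF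
    refine le_trans (aux_tsum_le_card_mul _ JF ?_ _ hscale) ?_
    · intro j hj
      rw [ne_eq, ENNReal.tsum_eq_zero] at hj
      push_neg at hj
      obtain ⟨m, hm⟩ := hj
      have hmem : (j, m) ∈ Pl := by
        by_contra hc
        rw [Set.indicator_of_notMem hc] at hm
        exact hm rfl
      have hP1 : dLen j ≤ v - u := hLle (j, m) hmem.1
      have hP2 : ¬ ((n : ℝ) + 1) * mxf (j, m).1 ≤ v - u := hmem.2
      dsimp only at hP2
      rw [hJF, Finset.mem_Icc]
      constructor
      · refine Int.ceil_le.mpr ?_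
        have hlog := Real.logb_le_logb_of_le one_lt_two (dLen_pos j) hP1
        rw [hlogdLen j] at hlog
        push_cast
        linarith
      · push_neg at hP2
        rw [hmxL j] at hP2
        have hgt : v - u < ((n : ℝ) + 1) * ((2 : ℝ) ^ K' * dLen j) := by
          rw [show ((n : ℝ) + 1) * ((2 : ℝ) ^ K' * dLen j)
            = ((n : ℝ) + 1) * (dLen j * 2 ^ K') from by ring]
          exact hP2
        have hlog := Real.logb_lt_logb one_lt_two hvu hgt
        have hne1 : ((n : ℝ) + 1) ≠ 0 := by positivity
        have hne2 : ((2 : ℝ) ^ K' * dLen j) ≠ 0 := (mul_pos (pow_pos two_pos _) (dLen_pos j)).ne'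
        have hne3 : ((2 : ℝ) ^ K' : ℝ) ≠ 0 := by positivity
        rw [Real.logb_mul hne1 hne2, Real.logb_mul hne3 (dLen_pos j).ne',
          hlogdLen j, hK'log] at hlog
        have hjlt : (j : ℝ) < Real.logb 2 ((n : ℝ) + 1) + (K' : ℝ) - Real.logb 2 (v - u) := by
          linarith
        have := Int.lt_ceil.mpr hjlt
        omega
    · refine mul_le_mul_left ?_ _
      rw [← ENNReal.ofReal_natCast]
      refine ENNReal.ofReal_le_ofReal ?_
      rw [hJF]
      refine aux_card_Icc_le ?_ (by linarith)
      have hc1 := Int.le_ceil (-Real.logb 2 (v - u))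
      have hc2 := (Int.ceil_lt_add_one
        (Real.logb 2 ((n : ℝ) + 1) + (K' : ℝ) - Real.logb 2 (v - u))).le
      rw [hX, ← hK'cast]
      push_cast
      linarith
  refine le_trans (add_le_add hsmall hlarge) ?_
  -- pass to real arithmetic
  have hA1 : (1 : ℝ) ≤ 2 ^ K := one_le_pow₀ one_le_two
  have hA2 : (1 : ℝ) ≤ 2 ^ K' := one_le_pow₀ one_le_two
  have hT : (0 : ℝ) ≤ B ^ 2 * (v - u) := mul_nonneg (sq_nonneg B) hvu.le
  have hN8 : ((NN : ℕ) : ℝ) = 4 * ((2 : ℝ) ^ K + 1) := by rw [hNN]; push_cast; ring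
  have hM12 : ((MM : ℕ) : ℝ) = 4 * (2 * (2 : ℝ) ^ K' + 1) := by rw [hMM]; push_cast; ring
  have hsq1 : ((2 : ℝ) ^ ((|k| : ℝ) / 2)) ^ 2 = 2 ^ K * 2 ^ K' := by
    rw [sq, ← Real.rpow_add two_pos]
    rw [show (|k| : ℝ) / 2 + (|k| : ℝ) / 2 = ((|k| : ℤ) : ℝ) from by push_cast; ring]
    rw [show ((|k| : ℤ) : ℝ) = ((k.natAbs : ℕ) : ℝ) from by
      rw [Nat.cast_natAbs]]
    rw [Real.rpow_natCast, show k.natAbs = K + K' from by omega, pow_add]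
  have hsq2 : (X ^ ((1 : ℝ) / 2)) ^ 2 = X := by
    rw [sq, ← Real.rpow_add (by linarith : (0 : ℝ) < X)]
    norm_num
  have hRHS : (100 * (2 : ℝ) ^ ((|k| : ℝ) / 2) * X ^ ((1 : ℝ) / 2) * B) ^ 2 * (v - u)
      = 10000 * ((2 ^ K * 2 ^ K') * (X * (B ^ 2 * (v - u)))) := by
    rw [mul_pow, mul_pow, mul_pow, hsq1, hsq2]
    ring
  have hX0 : (0 : ℝ) ≤ X := by linarith
  have hE : (0 : ℝ) ≤ B ^ 2 * ((v + 3 * (v - u)) - (u - 3 * (v - u))) :=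
    mul_nonneg (sq_nonneg B) (by linarith)
  have h12' : (0 : ℝ) ≤ 12 * ((2 : ℝ) ^ K' * (B ^ 2 * (v - u))) :=
    mul_nonneg (by norm_num) (mul_nonneg (pow_nonneg (by norm_num) _) hT)
  rw [show ((NN : ℝ≥0∞)) = ENNReal.ofReal ((NN : ℕ) : ℝ) from (ENNReal.ofReal_natCast _).symm,
    show ((MM : ℝ≥0∞)) = ENNReal.ofReal ((MM : ℕ) : ℝ) from (ENNReal.ofReal_natCast _).symm]
  rw [← ENNReal.ofReal_mul (Nat.cast_nonneg MM), ← ENNReal.ofReal_mul (Nat.cast_nonneg NN),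
    ← ENNReal.ofReal_mul (Nat.cast_nonneg NN), ← ENNReal.ofReal_mul hX0,
    ← ENNReal.ofReal_add (mul_nonneg (Nat.cast_nonneg NN) (mul_nonneg (Nat.cast_nonneg MM) hE))
      (mul_nonneg hX0 (mul_nonneg (Nat.cast_nonneg NN) h12'))]
  refine ENNReal.ofReal_le_ofReal ?_
  rw [hRHS]
  have key1 : ((NN : ℕ) : ℝ) ≤ 8 * 2 ^ K := by rw [hN8]; linarith
  have key2 : ((MM : ℕ) : ℝ) ≤ 12 * 2 ^ K' := by rw [hM12]; linarith
  have hNn : (0 : ℝ) ≤ ((NN : ℕ) : ℝ) := Nat.cast_nonneg _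
  have hMn : (0 : ℝ) ≤ ((MM : ℕ) : ℝ) := Nat.cast_nonneg _
  have hprod : ((NN : ℕ) : ℝ) * ((MM : ℕ) : ℝ) ≤ 96 * (2 ^ K * 2 ^ K') := by
    calc ((NN : ℕ) : ℝ) * ((MM : ℕ) : ℝ) ≤ (8 * 2 ^ K) * (12 * 2 ^ K') :=
          mul_le_mul key1 key2 hMn (by linarith)
      _ = 96 * (2 ^ K * 2 ^ K') := by ring
  have hS1 : ((NN : ℕ) : ℝ) * (((MM : ℕ) : ℝ)
        * (B ^ 2 * ((v + 3 * (v - u)) - (u - 3 * (v - u)))))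
      ≤ 672 * ((2 ^ K * 2 ^ K') * (B ^ 2 * (v - u))) := by
    nlinarith [hprod, hT, mul_nonneg hNn hMn]
  have h0 : (0 : ℝ) ≤ 12 * ((2 : ℝ) ^ K' * (B ^ 2 * (v - u))) := by
    have := hT
    positivity
  have hS2 : X * (((NN : ℕ) : ℝ) * (12 * ((2 : ℝ) ^ K' * (B ^ 2 * (v - u)))))
      ≤ 96 * (X * ((2 ^ K * 2 ^ K') * (B ^ 2 * (v - u)))) := by
    have h1 : ((NN : ℕ) : ℝ) * (12 * ((2 : ℝ) ^ K' * (B ^ 2 * (v - u))))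
        ≤ (8 * 2 ^ K) * (12 * ((2 : ℝ) ^ K' * (B ^ 2 * (v - u)))) :=
      mul_le_mul_of_nonneg_right key1 h0
    have h2 := mul_le_mul_of_nonneg_left h1 (by linarith : (0 : ℝ) ≤ X)
    calc X * (((NN : ℕ) : ℝ) * (12 * ((2 : ℝ) ^ K' * (B ^ 2 * (v - u)))))
        ≤ X * ((8 * 2 ^ K) * (12 * ((2 : ℝ) ^ K' * (B ^ 2 * (v - u))))) := h2
      _ = 96 * (X * ((2 ^ K * 2 ^ K') * (B ^ 2 * (v - u)))) := by ring
  have hAT : (0 : ℝ) ≤ (2 ^ K * 2 ^ K') * (B ^ 2 * (v - u)) := by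
    have := hT
    positivity
  nlinarith [hS1, hS2, hAT, hX1]
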